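/- arXiv:2005.11641 — 5 statements merged into one kernel-verified Lean document; each statement's English description precedes it below -/
import Mathlib

section
/- Consider the binomial family f(y;θ) = C(M,y) θ^y (1−θ)^{M−y}, y ∈ {0,…,M}, θ ∈ (0,1), with known number of trials M ≥ 1. For any integers r ≥ 1 and K ≥ 1, the condition (r+1)K − 1 ≤ M is necessary and sufficient for the family to be strongly identifiable in the r-th order; that is, (r+1)K − 1 ≤ M holds if and only if: for all distinct θ_1,…,θ_K ∈ (0,1) and all real numbers β_{jl} (1 ≤ j ≤ K, 0 ≤ l ≤ r), if max_{y ∈ {0,…,M}} |Σ_{j=1}^K Σ_{l=0}^r β_{jl} ∂^l f(y;θ_j)/∂θ^l| = 0, then β_{jl} = 0 for all j and l. -/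
open scoped BigOperators

noncomputable section

/-- The binomial density `f(y;θ) = C(M,y) θ^y (1−θ)^{M−y}` with `M` trials, viewed as a
(polynomial) function of the success probability `θ`. -/
def binomDensity (M y : ℕ) (θ : ℝ) : ℝ :=
  (M.choose y : ℝ) * θ ^ y * (1 - θ) ^ (M - y)

open Polynomial

lemma binomDensity_eq_eval (M y : ℕ) :
    binomDensity M y = fun x : ℝ => (bernsteinPolynomial ℝ M y).eval x := by
  funext x
  simp [binomDensity, bernsteinPolynomial, mul_assoc]

lemma iteratedDeriv_eval (l : ℕ) (p : ℝ[X]) :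
    iteratedDeriv l (fun x => p.eval x) = fun x => (derivative^[l] p).eval x := by
  induction l generalizing p with
  | zero => simp
  | succ n ih =>
    rw [iteratedDeriv_succ']
    have : (deriv fun x => p.eval x) = fun x => p.derivative.eval x := by
      funext x; exact p.deriv
    rw [this, ih, Function.iterate_succ_apply]

lemma eval_iterate_derivative_pow_mul_of_lt (a : ℝ) {n l : ℕ} (h : l < n) (Q : ℝ[X]) :
    (derivative^[l] ((X - C a) ^ n * Q)).eval a = 0 := by
  rw [Polynomial.iterate_derivative_mul, Polynomial.eval_finset_sum]
  apply Finset.sum_eq_zero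
  intro i _
  have hne : n - (l - i) ≠ 0 := by omega
  simp [Polynomial.iterate_derivative_X_sub_pow, zero_pow hne]

lemma eval_iterate_derivative_pow_mul (a : ℝ) (n : ℕ) (Q : ℝ[X]) :
    (derivative^[n] ((X - C a) ^ n * Q)).eval a = (n.factorial : ℝ) * Q.eval a := by
  rw [Polynomial.iterate_derivative_mul, Polynomial.eval_finset_sum]
  rw [Finset.sum_eq_single 0]
  · simp [Polynomial.iterate_derivative_X_sub_pow_self]
  · intro i hi hi0
    have hin : i ≤ n := Finset.mem_range_succ_iff.mp hi
    have : n - (n - i) = i := by omega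
    simp [Polynomial.iterate_derivative_X_sub_pow, this, zero_pow hi0]
  · intro h; simp at h

lemma bernstein_eval_sum (M k : ℕ) (hk : k ≤ M) (x : ℝ) :
    ∑ y ∈ Finset.range (M+1), (y.choose k : ℝ) * ((M.choose y : ℝ) * x ^ y * (1-x) ^ (M-y))
      = (M.choose k : ℝ) * x ^ k := by
  have hsub : Finset.Ico k (M+1) ⊆ Finset.range (M+1) := by
    rw [Finset.range_eq_Ico]; exact Finset.Ico_subset_Ico (Nat.zero_le _) le_rfl
  have hz : ∀ y ∈ Finset.range (M+1), y ∉ Finset.Ico k (M+1) →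
      (y.choose k : ℝ) * ((M.choose y : ℝ) * x ^ y * (1-x) ^ (M-y)) = 0 := by
    intro y hy hy'
    simp only [Finset.mem_range] at hy
    simp only [Finset.mem_Ico, not_and, not_lt] at hy'
    have : y < k := by omega
    simp [Nat.choose_eq_zero_of_lt this]
  rw [← Finset.sum_subset hsub hz, Finset.sum_Ico_eq_sum_range]
  have hMk : M + 1 - k = (M - k) + 1 := by omega
  rw [hMk]
  have key : ∀ z ∈ Finset.range (M - k + 1),
      ((k+z).choose k : ℝ) * ((M.choose (k+z) : ℝ) * x ^ (k+z) * (1-x) ^ (M-(k+z)))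
        = (M.choose k : ℝ) * x ^ k * (x ^ z * (1-x) ^ ((M-k)-z) * ((M-k).choose z : ℝ)) := by
    intro z hz
    simp only [Finset.mem_range] at hz
    have hzM : k + z ≤ M := by omega
    have hc : M.choose (k+z) * (k+z).choose k = M.choose k * (M-k).choose z := by
      have := Nat.choose_mul (n := M) (Nat.le_add_right k z)
      simpa using this
    have hc' : ((k+z).choose k : ℝ) * (M.choose (k+z) : ℝ)
        = (M.choose k : ℝ) * ((M-k).choose z : ℝ) := by
      rw [mul_comm]; exact_mod_cast congrArg (Nat.cast : ℕ → ℝ) hc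
    have hsub2 : M - (k+z) = (M-k) - z := by omega
    rw [hsub2, pow_add]
    linear_combination (x ^ k * x ^ z * (1-x) ^ ((M-k)-z)) * hc'
  rw [Finset.sum_congr rfl key, ← Finset.mul_sum, ← add_pow]
  simp

lemma bernstein_monomial (M k : ℕ) (hk : k ≤ M) :
    ∑ y ∈ Finset.range (M+1), (y.choose k : ℝ) • bernsteinPolynomial ℝ M y
      = (M.choose k : ℝ) • (X : ℝ[X]) ^ k := by
  apply Polynomial.funext
  intro x
  rw [Polynomial.eval_finset_sum]
  simp only [Polynomial.eval_smul, Polynomial.eval_pow, Polynomial.eval_X, smul_eq_mul,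
    bernsteinPolynomial, Polynomial.eval_mul, Polynomial.eval_pow, Polynomial.eval_natCast,
    Polynomial.eval_sub, Polynomial.eval_one, Polynomial.eval_X]
  exact bernstein_eval_sum M k hk x

/-- **Proposition 1 of the Group-Sort-Fuse paper.**
For the binomial family with `M ≥ 1` known trials and any integers `r, K ≥ 1`, the condition
`(r+1)K − 1 ≤ M` is necessary and sufficient for strong identifiability in the `r`-th order:
for all distinct `θ_1, …, θ_K ∈ (0,1)` and all reals `β_{jl}` (`1 ≤ j ≤ K`, `0 ≤ l ≤ r`),
if `∑_{j=1}^K ∑_{l=0}^r β_{jl} ∂^l f(y;θ_j)/∂θ^l = 0` for every `y ∈ {0,…,M}`, then all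
`β_{jl} = 0`. -/
theorem binomial_strong_identifiability_iff (M K r : ℕ)
    (hM : 1 ≤ M) (hK : 1 ≤ K) (hr : 1 ≤ r) :
    (r + 1) * K - 1 ≤ M ↔
      ∀ θ : Fin K → ℝ, (∀ j, θ j ∈ Set.Ioo (0:ℝ) 1) → Function.Injective θ →
        ∀ β : Fin K → Fin (r + 1) → ℝ,
          (∀ y : ℕ, y ≤ M →
            ∑ j, ∑ l : Fin (r + 1),
              β j l * iteratedDeriv (l : ℕ) (binomDensity M y) (θ j) = 0) →
          ∀ j l, β j l = 0 := by
  constructor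
  · intro hle θ hθIoo hθinj β H
    set Lm : ℝ[X] →ₗ[ℝ] ℝ := ∑ j, ∑ l : Fin (r+1),
      β j l • ((Polynomial.leval (θ j)).comp
        ((Polynomial.derivative : ℝ[X] →ₗ[ℝ] ℝ[X]) ^ (l:ℕ))) with hLm
    have hLapp : ∀ p : ℝ[X],
        Lm p = ∑ j, ∑ l : Fin (r+1), β j l * (derivative^[(l:ℕ)] p).eval (θ j) := by
      intro p
      rw [hLm]
      simp [LinearMap.sum_apply, LinearMap.smul_apply, LinearMap.comp_apply,
        Module.End.pow_apply, Polynomial.leval, smul_eq_mul]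
    have hB : ∀ y ≤ M, Lm (bernsteinPolynomial ℝ M y) = 0 := by
      intro y hy
      have hthis := H y hy
      have h2 : ∀ (j : Fin K) (l : Fin (r+1)),
          iteratedDeriv (l:ℕ) (binomDensity M y) (θ j)
            = (derivative^[(l:ℕ)] (bernsteinPolynomial ℝ M y)).eval (θ j) := by
        intro j l; rw [binomDensity_eq_eval, iteratedDeriv_eval]
      rw [hLapp]
      simp_rw [h2] at hthis
      exact hthis
    have hmono : ∀ k ≤ M, Lm ((X:ℝ[X])^k) = 0 := by
      intro k hk
      have h1 := congrArg Lm (bernstein_monomial M k hk)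
      rw [map_sum, map_smul] at h1
      have h2 : ∑ y ∈ Finset.range (M+1), Lm ((y.choose k : ℝ) • bernsteinPolynomial ℝ M y)
          = 0 := by
        apply Finset.sum_eq_zero
        intro y hy
        rw [map_smul, hB y (by simpa [Nat.lt_succ_iff] using hy), smul_zero]
      rw [h2] at h1
      have hcne : (M.choose k : ℝ) ≠ 0 := by
        exact_mod_cast (Nat.choose_pos hk).ne'
      have := h1.symm
      rw [smul_eq_mul] at this
      rcases mul_eq_zero.mp this with h | h
      · exact absurd h hcne
      · exact h
    have hdeg : ∀ p : ℝ[X], p.natDegree ≤ M → Lm p = 0 := by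
      intro p hp
      have hrepr := p.as_sum_range' (M+1) (by omega)
      rw [hrepr, map_sum]
      apply Finset.sum_eq_zero
      intro i hi
      rw [← Polynomial.smul_X_eq_monomial, map_smul,
        hmono i (by simpa [Nat.lt_succ_iff] using hi), smul_zero]
    have key : ∀ n : ℕ, ∀ j0 : Fin K, ∀ l0 : Fin (r+1), r ≤ (l0:ℕ) + n → β j0 l0 = 0 := by
      intro n
      induction n using Nat.strong_induction_on with
      | _ n IH =>
        intro j0 l0 hln
        set a := θ j0 with ha
        set P : ℝ[X] := (X - C a) ^ (l0:ℕ)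
            * ∏ j ∈ Finset.univ.erase j0, (X - C (θ j)) ^ (r+1) with hP
        have hl0r : (l0:ℕ) ≤ r := Nat.lt_succ_iff.mp l0.isLt
        have hdegP : P.natDegree ≤ M := by
          have hne1 : ((X - C a : ℝ[X]) ^ (l0:ℕ)) ≠ 0 :=
            pow_ne_zero _ (Polynomial.X_sub_C_ne_zero a)
          have hne2 : (∏ j ∈ Finset.univ.erase j0, ((X:ℝ[X]) - C (θ j)) ^ (r+1)) ≠ 0 :=
            Finset.prod_ne_zero_iff.mpr fun j _ =>
              pow_ne_zero _ (Polynomial.X_sub_C_ne_zero (θ j))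
          rw [hP, Polynomial.natDegree_mul hne1 hne2,
            Polynomial.natDegree_prod _ _ (fun j _ =>
              pow_ne_zero _ (Polynomial.X_sub_C_ne_zero (θ j)))]
          simp only [Polynomial.natDegree_pow, Polynomial.natDegree_X_sub_C, mul_one,
            Finset.sum_const, smul_eq_mul]
          have hcard : (Finset.univ.erase j0).card = K - 1 := by
            rw [Finset.card_erase_of_mem (Finset.mem_univ j0), Finset.card_univ,
              Fintype.card_fin]
          rw [hcard]
          obtain ⟨K', rfl⟩ := Nat.exists_eq_add_of_le hK
          have harith : (r+1) * (1 + K') = K' * (r+1) + r + 1 := by ring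
          have hsimp : 1 + K' - 1 = K' := by omega
          rw [hsimp]
          omega
        have hLP : Lm P = 0 := hdeg P hdegP
        have hW : (∏ j ∈ Finset.univ.erase j0, (a - θ j) ^ (r+1)) ≠ 0 := by
          apply Finset.prod_ne_zero_iff.mpr
          intro j hj
          apply pow_ne_zero
          have hjne : j ≠ j0 := Finset.ne_of_mem_erase hj
          exact sub_ne_zero.mpr fun hcontra => hjne (hθinj hcontra.symm)
        have hDl0 : (derivative^[(l0:ℕ)] P).eval a
            = ((l0:ℕ).factorial : ℝ) * ∏ j ∈ Finset.univ.erase j0, (a - θ j)^(r+1) := by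
          rw [hP, eval_iterate_derivative_pow_mul]
          congr 1
          rw [Polynomial.eval_prod]
          exact Finset.prod_congr rfl fun j _ => by simp
        have hDj : ∀ j : Fin K, j ≠ j0 → ∀ l : Fin (r+1),
            (derivative^[(l:ℕ)] P).eval (θ j) = 0 := by
          intro j hj l
          have hmem : j ∈ Finset.univ.erase j0 := Finset.mem_erase.mpr ⟨hj, Finset.mem_univ j⟩
          rw [hP, ← Finset.mul_prod_erase _ _ hmem, mul_left_comm]
          exact eval_iterate_derivative_pow_mul_of_lt _ l.isLt _
        have hDlt : ∀ l : Fin (r+1), (l:ℕ) < (l0:ℕ) →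
            (derivative^[(l:ℕ)] P).eval a = 0 := by
          intro l hl
          rw [hP]
          exact eval_iterate_derivative_pow_mul_of_lt _ hl _
        rw [hLapp] at hLP
        rw [Finset.sum_eq_single j0] at hLP
        · rw [Finset.sum_eq_single l0] at hLP
          · rw [hDl0] at hLP
            have hfac : (((l0:ℕ).factorial : ℕ) : ℝ) ≠ 0 :=
              Nat.cast_ne_zero.mpr (Nat.factorial_ne_zero _)
            rcases mul_eq_zero.mp hLP with h | h
            · exact h
            · exact absurd h (mul_ne_zero hfac hW)
          · intro l _ hl
            have hlne : (l:ℕ) ≠ (l0:ℕ) := fun h => hl (Fin.ext h)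
            rcases lt_or_gt_of_ne hlne with hlt | hgt
            · rw [hDlt l hlt, mul_zero]
            · have hlr : (l:ℕ) ≤ r := Nat.lt_succ_iff.mp l.isLt
              rw [IH (r - (l:ℕ)) (by omega) j0 l (by omega), zero_mul]
          · intro hcon; exact absurd (Finset.mem_univ l0) hcon
        · intro j _ hj
          exact Finset.sum_eq_zero fun l _ => by rw [hDj j hj l, mul_zero]
        · intro hcon; exact absurd (Finset.mem_univ j0) hcon
    intro j l
    exact key r j l (by omega)
  · intro h
    by_contra hlt
    push_neg at hlt
    set θ : Fin K → ℝ := fun j => ((j:ℕ)+1)/(K+1) with hθ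
    have hIoo : ∀ j, θ j ∈ Set.Ioo (0:ℝ) 1 := by
      intro j
      constructor
      · rw [hθ]; positivity
      · rw [hθ]
        simp only
        rw [div_lt_one (by positivity)]
        have : ((j:ℕ):ℝ) < K := by exact_mod_cast j.isLt
        linarith
    have hinj : Function.Injective θ := by
      intro j j' hjj
      rw [hθ] at hjj
      simp only at hjj
      have hK0 : ((K:ℝ)+1) ≠ 0 := by positivity
      field_simp at hjj
      exact Fin.ext (by exact_mod_cast (by linarith : ((j:ℕ):ℝ) = ((j':ℕ):ℝ)))
    set T : (Fin K → Fin (r+1) → ℝ) →ₗ[ℝ] (Fin (M+1) → ℝ) :=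
      { toFun := fun β y => ∑ j, ∑ l : Fin (r+1),
          β j l * iteratedDeriv (l:ℕ) (binomDensity M (y:ℕ)) (θ j)
        map_add' := by
          intro β γ
          funext y
          simp [add_mul, Finset.sum_add_distrib]
        map_smul' := by
          intro c β
          funext y
          simp [Finset.mul_sum, mul_assoc] } with hT
    have hnotinj : ¬ Function.Injective T := by
      intro hinjT
      have hle2 := LinearMap.finrank_le_finrank_of_injective hinjT
      rw [Module.finrank_pi_fintype, Module.finrank_pi ℝ] at hle2
      simp only [Module.finrank_pi, Fintype.card_fin, Finset.sum_const, Finset.card_univ,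
        smul_eq_mul] at hle2
      rw [mul_comm] at hle2
      have hpos : 0 < (r+1) * K := Nat.mul_pos (Nat.succ_pos r) hK
      omega
    obtain ⟨β₁, β₂, hTeq, hne⟩ := Function.not_injective_iff.mp hnotinj
    have hβ0 : T (β₁ - β₂) = 0 := by rw [map_sub, hTeq, sub_self]
    have hall := h θ hIoo hinj (β₁ - β₂) ?_
    · apply hne
      funext j l
      have h0 := hall j l
      simpa [sub_eq_zero] using h0
    · intro y hy
      have hfun := congrFun hβ0 ⟨y, by omega⟩
      simpa [hT] using hfun

end
end

section
/- Let K, r ≥ 1 and M be integers with (r+1)K − 1 ≤ M, let θ_1,…,θ_K be distinct numbers in (0,1), and let β_{jl} ∈ ℝ for 1 ≤ j ≤ K and 0 ≤ l ≤ r. If Σ_{j=1}^K Σ_{l=0}^r β_{jl} (M)_l w^l (1 + wθ_j)^{M−l} = 0 for all w ∈ ℝ, then β_{jl} = 0 for all j and l. -/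
open scoped BigOperators

section AuxGSF
open Polynomial Finset

lemma step_eq (a b c : ℝ) (k : ℕ) :
    (X - C b) * derivative ((X - C a) ^ k) - C c * (X - C a) ^ k
      = C ((k : ℝ) - c) * (X - C a) ^ k + C ((k : ℝ) * (a - b)) * (X - C a) ^ (k - 1) := by
  cases k with
  | zero => simp
  | succ k =>
    rw [derivative_pow, derivative_X_sub_C]
    rw [show (X - C b : ℝ[X]) = (X - C a) + (C a - C b) by ring]
    push_cast
    simp only [C_sub, C_mul, C_add, C_1, Nat.add_sub_cancel, mul_one]
    ring

lemma key' (Kn : ℕ) (a : Fin Kn → ℝ) (ha : Function.Injective a) :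
    ∀ (m : ℕ) (p : Fin Kn → ℕ) (g : Fin Kn → ℕ → ℝ),
    (∀ j k, g j k ≠ 0 → p j ≤ k ∧ k ≤ m) →
    (∑ j, (m + 1 - p j)) ≤ m + 1 →
    (∑ j, ∑ k ∈ range (m + 1), C (g j k) * (X - C (a j)) ^ k) = 0 →
    ∀ j k, g j k = 0 := by
  intro m
  induction m with
  | zero =>
    intro p g hsupp hsum h0 j k
    by_contra hg
    obtain ⟨hpk, hk0⟩ := hsupp j k hg
    have hk : k = 0 := Nat.le_zero.1 hk0
    subst hk
    have hpj : p j = 0 := Nat.le_zero.1 hpk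
    have hothers : ∀ j', j' ≠ j → g j' 0 = 0 := by
      intro j' hne
      by_contra hg'
      obtain ⟨hpk', _⟩ := hsupp j' 0 hg'
      have hpj' : p j' = 0 := Nat.le_zero.1 hpk'
      have hsub : (({j, j'} : Finset (Fin Kn)).sum fun i => 0 + 1 - p i)
          ≤ ∑ i, (0 + 1 - p i) := Finset.sum_le_sum_of_subset (Finset.subset_univ _)
      rw [Finset.sum_pair (Ne.symm hne)] at hsub
      omega
    simp only [zero_add, Finset.sum_range_one, pow_zero, mul_one] at h0
    rw [← map_sum] at h0
    have hz : (∑ j', g j' 0) = 0 := C_injective (by simpa using h0)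
    rw [Finset.sum_eq_single j (fun j' _ hne => hothers j' hne) (by simp)] at hz
    exact hg hz
  | succ m IH =>
    intro p g hsupp hsum h0
    by_cases hall : ∀ j, m + 1 < p j
    · intro j k
      by_contra hg
      obtain ⟨h1, h2⟩ := hsupp j k hg
      have := hall j; omega
    push_neg at hall
    obtain ⟨j₀, hj₀⟩ := hall
    set b := a j₀ with hb
    set g' : Fin Kn → ℕ → ℝ := fun j k =>
      ((k : ℝ) - (m + 1)) * g j k + ((k : ℝ) + 1) * (a j - b) * g j (k + 1) with hg'def
    set p' : Fin Kn → ℕ := fun j => if j = j₀ then p j else p j - 1 with hp'def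
    -- transform the polynomial identity
    have h1 : ∑ j, ∑ k ∈ range (m + 2),
        ((X - C b) * derivative (C (g j k) * (X - C (a j)) ^ k)
          - C ((m : ℝ) + 1) * (C (g j k) * (X - C (a j)) ^ k)) = 0 := by
      have h2 := congrArg (fun f : ℝ[X] =>
        (X - C b) * derivative f - C ((m : ℝ) + 1) * f) h0
      simp only [derivative_sum, Finset.mul_sum, map_zero, mul_zero, sub_zero] at h2
      rw [← Finset.sum_sub_distrib] at h2
      convert h2 using 2 with j _
      rw [← Finset.sum_sub_distrib]
    have h2 : ∀ j, ∑ k ∈ range (m + 2),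
        ((X - C b) * derivative (C (g j k) * (X - C (a j)) ^ k)
          - C ((m : ℝ) + 1) * (C (g j k) * (X - C (a j)) ^ k))
        = ∑ k ∈ range (m + 1), C (g' j k) * (X - C (a j)) ^ k := by
      intro j
      have hterm : ∀ k, (X - C b) * derivative (C (g j k) * (X - C (a j)) ^ k)
          - C ((m : ℝ) + 1) * (C (g j k) * (X - C (a j)) ^ k)
          = C (((k : ℝ) - (m + 1)) * g j k) * (X - C (a j)) ^ k
            + C ((k : ℝ) * (a j - b) * g j k) * (X - C (a j)) ^ (k - 1) := by
        intro k
        rw [derivative_C_mul]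
        have hst := step_eq (a j) b ((m : ℝ) + 1) k
        calc (X - C b) * (C (g j k) * derivative ((X - C (a j)) ^ k))
            - C ((m : ℝ) + 1) * (C (g j k) * (X - C (a j)) ^ k)
            = C (g j k) * ((X - C b) * derivative ((X - C (a j)) ^ k)
              - C ((m : ℝ) + 1) * (X - C (a j)) ^ k) := by ring
          _ = C (g j k) * (C ((k : ℝ) - (m + 1)) * (X - C (a j)) ^ k
              + C ((k : ℝ) * (a j - b)) * (X - C (a j)) ^ (k - 1)) := by rw [hst]
          _ = _ := by rw [mul_add, ← mul_assoc, ← mul_assoc, ← C_mul, ← C_mul]; ring_nf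
      have A : ∑ k ∈ range (m + 2), C (((k : ℝ) - (m + 1)) * g j k) * (X - C (a j)) ^ k
          = ∑ k ∈ range (m + 1), C (((k : ℝ) - (m + 1)) * g j k) * (X - C (a j)) ^ k := by
        rw [Finset.sum_range_succ]
        have : (((m + 1 : ℕ) : ℝ) - (m + 1)) * g j (m + 1) = 0 := by push_cast; ring
        rw [this, map_zero, zero_mul, add_zero]
      have B : ∑ k ∈ range (m + 2), C ((k : ℝ) * (a j - b) * g j k) * (X - C (a j)) ^ (k - 1)
          = ∑ k ∈ range (m + 1), C (((k : ℝ) + 1) * (a j - b) * g j (k + 1)) * (X - C (a j)) ^ k := by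
        rw [Finset.sum_range_succ']
        have h00 : ((0 : ℕ) : ℝ) * (a j - b) * g j 0 = 0 := by push_cast; ring
        rw [h00, map_zero, zero_mul, add_zero]
        refine Finset.sum_congr rfl fun k _ => ?_
        rw [show k + 1 - 1 = k from rfl]
        push_cast
        ring_nf
      rw [Finset.sum_congr rfl fun k _ => hterm k, Finset.sum_add_distrib, A, B,
        ← Finset.sum_add_distrib]
      refine Finset.sum_congr rfl fun k _ => ?_
      rw [← add_mul, ← C_add]
    have h0' : ∑ j, ∑ k ∈ range (m + 1), C (g' j k) * (X - C (a j)) ^ k = 0 := by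
      rw [← Finset.sum_congr rfl fun j _ => h2 j]
      exact h1
    have hsupp' : ∀ j k, g' j k ≠ 0 → p' j ≤ k ∧ k ≤ m := by
      intro j k hgk
      by_contra hcon
      apply hgk
      have hp'le : p' j ≤ p j := by
        simp only [hp'def]; split <;> omega
      have t1 : ((k : ℝ) - (m + 1)) * g j k = 0 := by
        rcases eq_or_ne (g j k) 0 with h | h
        · rw [h, mul_zero]
        · obtain ⟨hpk, hkm⟩ := hsupp j k h
          rcases eq_or_ne k (m + 1) with hk | hk
          · subst hk; push_cast; ring
          · exact absurd ⟨le_trans hp'le hpk, by omega⟩ hcon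
      have t2 : ((k : ℝ) + 1) * (a j - b) * g j (k + 1) = 0 := by
        rcases eq_or_ne j j₀ with hj | hj
        · subst hj; rw [← hb, sub_self, mul_zero, zero_mul]
        · rcases eq_or_ne (g j (k + 1)) 0 with h | h
          · rw [h, mul_zero]
          · obtain ⟨hpk, hkm⟩ := hsupp j (k + 1) h
            have : p' j = p j - 1 := by simp [hp'def, hj]
            exact absurd ⟨by omega, by omega⟩ hcon
      rw [hg'def]
      dsimp only
      rw [t1, t2, add_zero]
    have hsum' : ∑ j, (m + 1 - p' j) ≤ m + 1 := by
      have hkey : (∑ j, (m + 1 - p' j)) + 1 ≤ ∑ j, (m + 1 + 1 - p j) := by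
        rw [← Finset.sum_erase_add _ _ (Finset.mem_univ j₀),
          ← Finset.sum_erase_add _ (fun j => m + 1 + 1 - p j) (Finset.mem_univ j₀)]
        have hterm : ∀ j ∈ Finset.univ.erase j₀, m + 1 - p' j ≤ m + 1 + 1 - p j := by
          intro j hj
          have hjne : j ≠ j₀ := Finset.ne_of_mem_erase hj
          simp only [hp'def, if_neg hjne]
          omega
        have hj₀e : m + 1 - p' j₀ + 1 = m + 1 + 1 - p j₀ := by
          simp only [hp'def, if_pos rfl]
          omega
        calc (∑ j ∈ Finset.univ.erase j₀, (m + 1 - p' j)) + (m + 1 - p' j₀) + 1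
            = (∑ j ∈ Finset.univ.erase j₀, (m + 1 - p' j)) + ((m + 1 - p' j₀) + 1) := by ring
          _ ≤ (∑ j ∈ Finset.univ.erase j₀, (m + 1 + 1 - p j)) + (m + 1 + 1 - p j₀) := by
              rw [← hj₀e]
              exact Nat.add_le_add (Finset.sum_le_sum hterm) le_rfl
      omega
    have hG' := IH p' g' hsupp' hsum' h0'
    have hne0 : ∀ j, j ≠ j₀ → 1 ≤ p j := by
      intro j hj
      by_contra hcon
      push_neg at hcon
      have hsub : (({j, j₀} : Finset (Fin Kn)).sum fun i => m + 1 + 1 - p i)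
          ≤ ∑ i, (m + 1 + 1 - p i) := Finset.sum_le_sum_of_subset (Finset.subset_univ _)
      rw [Finset.sum_pair hj] at hsub
      omega
    have hab : ∀ j, j ≠ j₀ → a j - b ≠ 0 := fun j hj =>
      sub_ne_zero.2 fun hEq => hj (ha hEq)
    have hrest : ∀ j, j ≠ j₀ → ∀ k, g j k = 0 := by
      intro j hj k
      induction k using Nat.strong_induction_on with
      | _ k IHk =>
        by_cases hk : k < p j
        · by_contra hgk
          exact absurd (hsupp j k hgk).1 (by omega)
        · have hk1 : 1 ≤ k := le_trans (hne0 j hj) (not_lt.1 hk)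
          have hG := hG' j (k - 1)
          rw [hg'def] at hG
          dsimp only at hG
          rw [IHk (k - 1) (by omega), mul_zero, zero_add,
            show k - 1 + 1 = k from by omega] at hG
          have hkR : ((k - 1 : ℕ) : ℝ) + 1 ≠ 0 := by positivity
          rcases mul_eq_zero.1 hG with hG2 | hG2
          · rcases mul_eq_zero.1 hG2 with hG3 | hG3
            · exact absurd hG3 hkR
            · exact absurd hG3 (hab j hj)
          · exact hG2
    have hj₀low : ∀ k, k ≤ m → g j₀ k = 0 := by
      intro k hk
      have hG := hG' j₀ k
      rw [hg'def] at hG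
      dsimp only at hG
      rw [← hb, sub_self, mul_zero, zero_mul, add_zero] at hG
      have hne : ((k : ℝ) - (m + 1)) ≠ 0 := by
        have : (k : ℝ) < (m : ℝ) + 1 := by exact_mod_cast Nat.lt_succ_of_le hk
        intro hEq; nlinarith
      rcases mul_eq_zero.1 hG with hG2 | hG2
      · exact absurd hG2 hne
      · exact hG2
    have hj₀top : g j₀ (m + 1) = 0 := by
      have hred : ∑ j, ∑ k ∈ range (m + 2), C (g j k) * (X - C (a j)) ^ k
          = C (g j₀ (m + 1)) * (X - C b) ^ (m + 1) := by
        rw [Finset.sum_eq_single j₀ (fun j _ hj => Finset.sum_eq_zero fun k _ => by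
          rw [hrest j hj k, map_zero, zero_mul]) (by simp)]
        rw [Finset.sum_eq_single (m + 1) (fun k hk hkne => by
          rw [hj₀low k (by simp at hk; omega), map_zero, zero_mul])
          (fun hmem => absurd (Finset.mem_range.2 (by omega)) hmem)]
      rw [h0] at hred
      have hXb : ((X : ℝ[X]) - C b) ^ (m + 1) ≠ 0 := pow_ne_zero _ (X_sub_C_ne_zero b)
      rcases mul_eq_zero.1 hred.symm with hz | hz
      · exact C_injective (by simpa using hz)
      · exact absurd hz hXb
    intro j k
    rcases eq_or_ne j j₀ with hj | hj
    · subst hj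
      rcases Nat.lt_or_ge k (m + 1) with hk | hk
      · exact hj₀low k (by omega)
      · rcases eq_or_ne k (m + 1) with hk2 | hk2
        · rw [hk2]; exact hj₀top
        · by_contra hgk
          exact absurd (hsupp j k hgk).2 (by omega)
    · exact hrest j hj k


lemma single_center' (θv : ℝ) (hθ : θv ≠ 0) (M r : ℕ) (hrM : r ≤ M) (βv : ℕ → ℝ)
    (h : ∑ l ∈ range (r + 1),
      C (βv l * (M.descFactorial l : ℝ)) * (X ^ l * (1 + X * C θv) ^ (M - l)) = 0) :
    ∀ l ≤ r, βv l = 0 := by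
  by_contra hc
  push_neg at hc
  obtain ⟨l₁, hl₁r, hl₁⟩ := hc
  set S : Finset ℕ := (range (r + 1)).filter (fun l => βv l ≠ 0) with hS
  have hSne : S.Nonempty := ⟨l₁, Finset.mem_filter.2 ⟨Finset.mem_range.2 (by omega), hl₁⟩⟩
  set l₀ := S.max' hSne with hl₀
  have hl₀S : l₀ ∈ S := S.max'_mem hSne
  have hl₀r : l₀ ≤ r := by
    have := (Finset.mem_filter.1 hl₀S).1; simp at this; omega
  have hβl₀ : βv l₀ ≠ 0 := (Finset.mem_filter.1 hl₀S).2
  have hgt : ∀ l, l₀ < l → l ≤ r → βv l = 0 := by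
    intro l hl hlr
    by_contra hb
    have : l ∈ S := Finset.mem_filter.2 ⟨Finset.mem_range.2 (by omega), hb⟩
    have := S.le_max' l this
    omega
  -- restrict sum
  have hres : ∑ l ∈ range (l₀ + 1),
      C (βv l * (M.descFactorial l : ℝ)) * (X ^ l * (1 + X * C θv) ^ (M - l)) = 0 := by
    rw [← h]
    refine Finset.sum_subset (by intro x hx; simp only [Finset.mem_range] at hx ⊢; omega) ?_
    intro l hl hnl
    simp only [Finset.mem_range, Finset.mem_range] at hl hnl
    rw [hgt l (by omega) (by omega), zero_mul, map_zero, zero_mul]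
  -- factor
  have hfac : ∀ l ∈ range (l₀ + 1),
      C (βv l * (M.descFactorial l : ℝ)) * (X ^ l * (1 + X * C θv) ^ (M - l))
      = (1 + X * C θv) ^ (M - l₀) *
        (C (βv l * (M.descFactorial l : ℝ)) * (X ^ l * (1 + X * C θv) ^ (l₀ - l))) := by
    intro l hl
    simp only [Finset.mem_range] at hl
    rw [show M - l = (M - l₀) + (l₀ - l) by omega, pow_add]
    ring
  rw [Finset.sum_congr rfl hfac, ← Finset.mul_sum] at hres
  have hbase : (1 + X * C θv : ℝ[X]) ≠ 0 := fun hEq => by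
    have := congrArg (fun p : ℝ[X] => p.eval 0) hEq
    simp at this
  have h2 : ∑ l ∈ range (l₀ + 1),
      C (βv l * (M.descFactorial l : ℝ)) * (X ^ l * (1 + X * C θv) ^ (l₀ - l)) = 0 := by
    rcases mul_eq_zero.1 hres with hz | hz
    · exact absurd hz (pow_ne_zero _ hbase)
    · exact hz
  have hev := congrArg (fun p : ℝ[X] => p.eval (-θv⁻¹)) h2
  simp only [eval_finset_sum, eval_mul, eval_pow, eval_add, eval_one, eval_X, eval_C,
    eval_zero] at hev
  have hzero : 1 + -θv⁻¹ * θv = 0 := by field_simp; norm_num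
  rw [Finset.sum_eq_single l₀ (fun l hl hlne => by
      simp only [Finset.mem_range] at hl
      rw [hzero, zero_pow (by omega : l₀ - l ≠ 0), mul_zero, mul_zero])
    (fun hmem => absurd (Finset.mem_range.2 (by omega)) hmem)] at hev
  rw [Nat.sub_self, pow_zero, mul_one] at hev
  have hdf : (M.descFactorial l₀ : ℝ) ≠ 0 := by
    have : ¬ (M < l₀) := by omega
    exact_mod_cast fun hEq => this (Nat.descFactorial_eq_zero_iff_lt.1 (by exact_mod_cast hEq))
  have hx : (-θv⁻¹ : ℝ) ^ l₀ ≠ 0 := pow_ne_zero _ (by simp [hθ])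
  rcases mul_eq_zero.1 hev with hz | hz
  · rcases mul_eq_zero.1 hz with hz2 | hz2
    · exact hβl₀ hz2
    · exact hdf hz2
  · exact hx hz

lemma term_expand' (θv : ℝ) (hθ : θv ≠ 0) (M l : ℕ) (hlM : l ≤ M) :
    (X : ℝ[X]) ^ l * (1 + X * C θv) ^ (M - l)
      = ∑ i ∈ range (l + 1),
        C ((l.choose i : ℝ) * (-θv⁻¹) ^ (l - i) * θv ^ (M - l)) *
          (X - C (-θv⁻¹)) ^ (M - l + i) := by
  have hfac : (1 + X * C θv : ℝ[X]) = C θv * (X - C (-θv⁻¹)) := by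
    rw [mul_sub, ← C_mul, mul_neg, mul_inv_cancel₀ hθ, map_neg, C_1]
    ring
  have hX : (X : ℝ[X]) = (X - C (-θv⁻¹)) + C (-θv⁻¹) := by ring
  calc (X : ℝ[X]) ^ l * (1 + X * C θv) ^ (M - l)
      = ((X - C (-θv⁻¹)) + C (-θv⁻¹)) ^ l * (C θv ^ (M - l) * (X - C (-θv⁻¹)) ^ (M - l)) := by
        rw [← hX, hfac, mul_pow]
    _ = (∑ i ∈ range (l + 1), (X - C (-θv⁻¹)) ^ i * C (-θv⁻¹) ^ (l - i) * (l.choose i : ℝ[X]))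
        * (C θv ^ (M - l) * (X - C (-θv⁻¹)) ^ (M - l)) := by rw [add_pow]
    _ = _ := by
        rw [Finset.sum_mul]
        refine Finset.sum_congr rfl fun i hi => ?_
        simp only [Finset.mem_range] at hi
        rw [show M - l + i = i + (M - l) by omega, pow_add]
        rw [show ((l.choose i : ℝ[X])) = C ((l.choose i : ℝ)) by push_cast; rfl]
        rw [← C_pow, ← C_pow, C_mul, C_mul]
        ring

end AuxGSF

open Polynomial Finset

/-- **The key algebraic lemma in the proof of Proposition 1 of the Group-Sort-Fuse paper.**
Let `K, r ≥ 1` and `M` be integers with `(r+1)K − 1 ≤ M`, let `θ_1, …, θ_K` be distinct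
numbers in `(0,1)`, and let `β_{jl} ∈ ℝ` for `1 ≤ j ≤ K`, `0 ≤ l ≤ r`. If
`∑_{j=1}^K ∑_{l=0}^r β_{jl} (M)_l w^l (1 + w θ_j)^{M−l} = 0` for all `w ∈ ℝ`
(where `(M)_l = M!/(M−l)!` is the falling factorial), then `β_{jl} = 0` for all `j, l`. -/

theorem binomial_generating_function_lemma
    (K r M : ℕ) (hK : 1 ≤ K) (hr : 1 ≤ r) (hM : (r + 1) * K - 1 ≤ M)
    (θ : Fin K → ℝ) (hθmem : ∀ j, θ j ∈ Set.Ioo (0:ℝ) 1) (hθinj : Function.Injective θ)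
    (β : Fin K → Fin (r + 1) → ℝ)
    (h : ∀ w : ℝ,
      ∑ j, ∑ l : Fin (r + 1),
        β j l * (M.descFactorial (l : ℕ) : ℝ) * w ^ (l : ℕ) * (1 + w * θ j) ^ (M - (l:ℕ))
        = 0) :
    ∀ j l, β j l = 0 := by
  have hmul : (r + 1) * K = K * (r + 1) := Nat.mul_comm _ _
  have hrK : r + 1 ≤ (r + 1) * K := Nat.le_mul_of_pos_right _ hK
  have hrM : r ≤ M := by omega
  have hθne : ∀ j, θ j ≠ 0 := fun j => ne_of_gt (hθmem j).1
  set a : Fin K → ℝ := fun j => -(θ j)⁻¹ with hadef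
  have hainj : Function.Injective a := by
    intro j j' hEq
    simp only [hadef] at hEq
    exact hθinj (inv_injective (neg_injective hEq))
  set B : Fin K → ℕ → ℝ := fun j l => if hl : l < r + 1 then β j ⟨l, hl⟩ else 0 with hBdef
  have hBeq : ∀ (j : Fin K) (l : Fin (r + 1)), B j (l : ℕ) = β j l := by
    intro j l
    rw [hBdef]
    dsimp only
    rw [dif_pos l.isLt]
  -- rewritten hypothesis
  have h' : ∀ w : ℝ, ∑ j, ∑ l ∈ range (r + 1),
      B j l * (M.descFactorial l : ℝ) * w ^ l * (1 + w * θ j) ^ (M - l) = 0 := by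
    intro w
    rw [← h w]
    refine Finset.sum_congr rfl fun j _ => ?_
    rw [← Fin.sum_univ_eq_sum_range
      (fun l => B j l * (M.descFactorial l : ℝ) * w ^ l * (1 + w * θ j) ^ (M - l)) (r + 1)]
    exact Finset.sum_congr rfl fun l _ => by rw [hBeq]
  have hP0 : ∑ j, ∑ l ∈ range (r + 1),
      C (B j l * (M.descFactorial l : ℝ)) * (X ^ l * (1 + X * C (θ j)) ^ (M - l)) = 0 := by
    apply Polynomial.funext
    intro w
    simp only [eval_finset_sum, eval_mul, eval_pow, eval_add, eval_one, eval_X, eval_C,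
      eval_zero]
    rw [← h' w]
    exact Finset.sum_congr rfl fun j _ => Finset.sum_congr rfl fun l _ => by ring
  set T : Finset ((_ : ℕ) × ℕ) := (range (r + 1)).sigma (fun l => range (l + 1)) with hTdef
  set γ : Fin K → ((_ : ℕ) × ℕ) → ℝ := fun j t =>
    B j t.1 * (M.descFactorial t.1 : ℝ) *
      ((t.1.choose t.2 : ℝ) * (a j) ^ (t.1 - t.2) * (θ j) ^ (M - t.1)) with hγdef
  set g : Fin K → ℕ → ℝ := fun j k =>
    ∑ t ∈ T.filter (fun t => M - t.1 + t.2 = k), γ j t with hgdef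
  have hmaps : ∀ t ∈ T, M - t.1 + t.2 ∈ range (M + 1) := by
    intro t ht
    simp only [hTdef, Finset.mem_sigma, Finset.mem_range] at ht ⊢
    omega
  have hinner : ∀ j, ∑ k ∈ range (M + 1), C (g j k) * (X - C (a j)) ^ k
      = ∑ l ∈ range (r + 1),
        C (B j l * (M.descFactorial l : ℝ)) * (X ^ l * (1 + X * C (θ j)) ^ (M - l)) := by
    intro j
    have hR : ∀ l ∈ range (r + 1),
        C (B j l * (M.descFactorial l : ℝ)) * (X ^ l * (1 + X * C (θ j)) ^ (M - l))
        = ∑ i ∈ range (l + 1), C (γ j ⟨l, i⟩) * (X - C (a j)) ^ (M - l + i) := by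
      intro l hl
      simp only [Finset.mem_range] at hl
      rw [term_expand' (θ j) (hθne j) M l (by omega), Finset.mul_sum]
      refine Finset.sum_congr rfl fun i hi => ?_
      rw [← mul_assoc, ← C_mul]
    calc ∑ k ∈ range (M + 1), C (g j k) * (X - C (a j)) ^ k
        = ∑ k ∈ range (M + 1), ∑ t ∈ T.filter (fun t => M - t.1 + t.2 = k),
            C (γ j t) * (X - C (a j)) ^ (M - t.1 + t.2) := by
          refine Finset.sum_congr rfl fun k hk => ?_
          rw [hgdef]
          dsimp only
          rw [map_sum, Finset.sum_mul]
          exact Finset.sum_congr rfl fun t ht => by rw [(Finset.mem_filter.1 ht).2]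
      _ = ∑ t ∈ T, C (γ j t) * (X - C (a j)) ^ (M - t.1 + t.2) :=
          Finset.sum_fiberwise_of_maps_to hmaps _
      _ = ∑ l ∈ range (r + 1), ∑ i ∈ range (l + 1),
            C (γ j ⟨l, i⟩) * (X - C (a j)) ^ (M - l + i) :=
          by rw [hTdef]; exact (Finset.sum_sigma' (range (r + 1)) (fun l => range (l + 1))
            (fun l i => C (γ j ⟨l, i⟩) * (X - C (a j)) ^ (M - l + i))).symm
      _ = _ := (Finset.sum_congr rfl hR).symm
  have hsupp : ∀ j k, g j k ≠ 0 → M - r ≤ k ∧ k ≤ M := by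
    intro j k hgk
    rw [hgdef] at hgk
    dsimp only at hgk
    obtain ⟨t, ht, _⟩ := Finset.exists_ne_zero_of_sum_ne_zero hgk
    obtain ⟨htT, htk⟩ := Finset.mem_filter.1 ht
    simp only [hTdef, Finset.mem_sigma, Finset.mem_range] at htT
    omega
  have hsum : ∑ _j : Fin K, (M + 1 - (M - r)) ≤ M + 1 := by
    rw [Finset.sum_const, Finset.card_univ, Fintype.card_fin, smul_eq_mul]
    have : M + 1 - (M - r) = r + 1 := by omega
    rw [this]
    omega
  have h0key : ∑ j, ∑ k ∈ range (M + 1), C (g j k) * (X - C (a j)) ^ k = 0 :=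
    (Finset.sum_congr rfl fun j _ => hinner j).trans hP0
  have hG := key' K a hainj M (fun _ => M - r) g hsupp hsum h0key
  intro j l
  have hinner0 : ∑ l ∈ range (r + 1),
      C (B j l * (M.descFactorial l : ℝ)) * (X ^ l * (1 + X * C (θ j)) ^ (M - l)) = 0 := by
    rw [← hinner j]
    exact Finset.sum_eq_zero fun k _ => by rw [hG j k, map_zero, zero_mul]
  have hB0 := single_center' (θ j) (hθne j) M r hrM (B j) hinner0 (l : ℕ) (by omega)
  rwa [hBeq] at hB0
end

section
/- Let t_1,…,t_K ∈ ℝ and let α be a permutation of {1,…,K} sorting them in nondecreasing order: t_{α(1)} ≤ t_{α(2)} ≤ … ≤ t_{α(K)}. Then for every cluster partition {C_1,…,C_H} of {t_1,…,t_K}, each set α^{-1}({j : t_j ∈ C_h}), h = 1,…,H, is a set of consecutive integers. In other words, the permutation inducing the natural ordering on the real line satisfies the atom-ordering property of a cluster ordering. -/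
/-- **The natural ordering on the real line is a cluster ordering (atom-ordering
property), as asserted in Section 2 of the Group-Sort-Fuse paper.**
Let `t_1, …, t_K ∈ ℝ` and let `α` be a permutation sorting them in nondecreasing order.
Then for every cluster partition of `{t_1,…,t_K}` (encoded by the fibers of a surjective
block map `B` all of whose within-cluster distances are strictly smaller than all of its
between-cluster distances), each set `α⁻¹({j : t_j ∈ C_h})` is a set of consecutive
integers (i.e. is interval-closed). -/
theorem natural_ordering_is_cluster_ordering
    (K H : ℕ) (t : Fin K → ℝ) (α : Equiv.Perm (Fin K))
    (hsort : ∀ i j : Fin K, i ≤ j → t (α i) ≤ t (α j))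
    (B : Fin K → Fin H) (hBsurj : Function.Surjective B)
    (hcluster : ∀ (h : Fin H) (i j l s : Fin K), B i = h → B j = h → B l = h → B s ≠ h →
      |t i - t j| < |t l - t s|) :
    ∀ (h : Fin H) (i j l : Fin K), i ≤ j → j ≤ l →
      B (α i) = h → B (α l) = h → B (α j) = h := by
  intro h i j l hij hjl hi hl
  by_contra hj
  have h1 : t (α i) ≤ t (α j) := hsort i j hij
  have h2 : t (α j) ≤ t (α l) := hsort j l hjl
  have := hcluster h (α i) (α l) (α i) (α j) hi hl hi hj
  rw [abs_sub_comm (t (α i)) (t (α j))] at this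
  rw [abs_of_nonpos (by linarith), abs_of_nonneg (by linarith)] at this
  linarith
end

section
/- Let t_1,…,t_K ∈ ℝ^d and let α be any permutation of {1,…,K} satisfying the greedy nearest-neighbor property: for each k = 2,…,K, α(k) minimizes ‖t_j − t_{α(k−1)}‖ over all indices j ∈ {1,…,K} ∖ {α(1),…,α(k−1)}. Then for every cluster partition {C_1,…,C_H} of {t_1,…,t_K}, each set α^{-1}({j : t_j ∈ C_h}), h = 1,…,H, is a set of consecutive integers; that is, any such greedy permutation satisfies the atom-ordering property of a cluster ordering. -/
/-- **The greedy nearest-neighbour ordering satisfies the atom-ordering property of a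
cluster ordering (equation (7) of the Group-Sort-Fuse paper).**
Let `t_1, …, t_K ∈ ℝ^d` (`K = m + 1`) and let `α` be any permutation with the greedy
property: for each `k ≥ 2`, `α(k)` minimizes the distance to `t_{α(k−1)}` among all
indices not yet visited.  Then for every cluster partition of `{t_1,…,t_K}` (encoded by
the fibers of a surjective block map `B` whose within-cluster distances are all strictly
smaller than its between-cluster distances), each set `α⁻¹({j : t_j ∈ C_h})` is a set of
consecutive integers (i.e. is interval-closed). -/
theorem greedy_ordering_is_cluster_ordering
    (d m H : ℕ) (t : Fin (m + 1) → EuclideanSpace ℝ (Fin d))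
    (α : Equiv.Perm (Fin (m + 1)))
    (hgreedy : ∀ k : Fin m, ∀ j : Fin (m + 1),
      (∀ i : Fin (m + 1), i ≤ k.castSucc → α i ≠ j) →
      dist (t (α k.succ)) (t (α k.castSucc)) ≤ dist (t j) (t (α k.castSucc)))
    (B : Fin (m + 1) → Fin H) (hBsurj : Function.Surjective B)
    (hcluster : ∀ (h : Fin H) (i j l s : Fin (m + 1)),
      B i = h → B j = h → B l = h → B s ≠ h →
      dist (t i) (t j) < dist (t l) (t s)) :
    ∀ (h : Fin H) (i j l : Fin (m + 1)), i ≤ j → j ≤ l →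
      B (α i) = h → B (α l) = h → B (α j) = h := by
  intro h i j l hij hjl hi hl
  by_contra hj
  have hij' : i < j := lt_of_le_of_ne hij (by rintro rfl; exact hj hi)
  have hjl' : j < l := lt_of_le_of_ne hjl (by rintro rfl; exact hj hl)
  set S : Finset (Fin (m + 1)) :=
    Finset.univ.filter (fun k => i ≤ k ∧ k < j ∧ B (α k) = h) with hS
  have hSne : S.Nonempty := ⟨i, by simp [hS, hij', hi]⟩
  set k := S.max' hSne with hk
  have hkS : k ∈ S := S.max'_mem hSne
  simp only [hS, Finset.mem_filter, Finset.mem_univ, true_and] at hkS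
  obtain ⟨hik, hkj, hkh⟩ := hkS
  have hkm : (k : ℕ) < m := by
    have h1 : (k : ℕ) < (j : ℕ) := hkj
    have h2 : (j : ℕ) < (l : ℕ) := hjl'
    have h3 : (l : ℕ) < m + 1 := l.isLt
    omega
  set κ : Fin m := ⟨k, hkm⟩ with hκ
  have hcast : κ.castSucc = k := by ext; simp [hκ]
  have hsuccval : (κ.succ : ℕ) = (k : ℕ) + 1 := by simp [hκ]
  have hsuccj : κ.succ ≤ j := by
    rw [Fin.le_def, hsuccval]
    exact hkj
  have hnext : B (α κ.succ) ≠ h := by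
    rcases eq_or_lt_of_le hsuccj with heq | hlt
    · rw [heq]; exact hj
    · intro hB
      have hmem : κ.succ ∈ S := by
        simp only [hS, Finset.mem_filter, Finset.mem_univ, true_and]
        refine ⟨?_, hlt, hB⟩
        rw [Fin.le_def, hsuccval]
        have := (Fin.le_def).mp hik
        omega
      have hle := S.le_max' _ hmem
      rw [← hk, Fin.le_def, hsuccval] at hle
      omega
  have hunv : ∀ i' : Fin (m + 1), i' ≤ κ.castSucc → α i' ≠ α l := by
    intro i' hi' heq
    have : i' = l := α.injective heq
    have hv : (i' : ℕ) = (l : ℕ) := by rw [this]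
    rw [hcast, Fin.le_def] at hi'
    have h1 : (k : ℕ) < (j : ℕ) := hkj
    have h2 : (j : ℕ) < (l : ℕ) := hjl'
    omega
  have hgr := hgreedy κ (α l) hunv
  rw [hcast] at hgr
  have hcl := hcluster h (α l) (α k) (α k) (α κ.succ) hl hkh hkh hnext
  rw [dist_comm (t (α k))] at hcl
  exact absurd hgr (not_le.mpr hcl)
end

section
/- Let p and p_0 be probability densities with respect to a σ-finite measure ν on a measurable space Y, let P_0 be the probability measure with density p_0, and let Q be any probability measure on Y with Q({p_0 = 0}) = 0. Then ¼ ∫_{{p_0 > 0}} log(p/p_0) dQ ≤ ∫_{{p_0 > 0}} ½ log((p + p_0)/(2p_0)) d(Q − P_0) − h²((p + p_0)/2, p_0), where the left-hand integral is interpreted in [−∞, ∞). -/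
open MeasureTheory
open scoped ENNReal NNReal

noncomputable section

lemma aux_amgm_log (a b : ℝ) (ha : 0 < a) (hb : 0 < b) :
    Real.log (a / b) ≤ 2 * Real.log ((a + b) / (2 * b)) := by
  have hab : 0 < a / b := div_pos ha hb
  have key : 2 * (Real.sqrt a * Real.sqrt b) ≤ a + b := by
    nlinarith [sq_nonneg (Real.sqrt a - Real.sqrt b), Real.sq_sqrt ha.le, Real.sq_sqrt hb.le]
  have hs : Real.sqrt (a / b) ≤ (a + b) / (2 * b) := by
    rw [Real.sqrt_div ha.le, div_le_div_iff₀ (Real.sqrt_pos.2 hb) (by positivity)]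
    nlinarith [Real.sqrt_nonneg b, Real.sqrt_nonneg a, Real.sq_sqrt hb.le,
      mul_le_mul_of_nonneg_right key (Real.sqrt_nonneg b)]
  have := Real.log_le_log (Real.sqrt_pos.2 hab) hs
  rw [Real.log_sqrt hab.le] at this
  linarith

lemma aux_kl (a b : ℝ) (ha : 0 ≤ a) (hb : 0 < b) :
    b * (2⁻¹ * Real.log ((a + b) / (2 * b))) ≤ Real.sqrt ((a + b) / 2 * b) - b := by
  set m : ℝ := (a + b) / 2 with hm
  have hm0 : 0 < m := by positivity
  have hratio : (a + b) / (2 * b) = m / b := by rw [hm]; ring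
  have hlog : Real.log (m / b) ≤ 2 * (Real.sqrt (m / b) - 1) := by
    have h1 : Real.log (Real.sqrt (m / b)) ≤ Real.sqrt (m / b) - 1 :=
      Real.log_le_sub_one_of_pos (Real.sqrt_pos.2 (div_pos hm0 hb))
    rw [Real.log_sqrt (div_pos hm0 hb).le] at h1
    linarith
  have hsq : b * Real.sqrt (m / b) = Real.sqrt (m * b) := by
    rw [Real.sqrt_div hm0.le, Real.sqrt_mul hm0.le]
    rw [eq_comm, mul_comm b, div_mul_eq_mul_div, mul_div_assoc, Real.div_sqrt]
  rw [hratio]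
  nlinarith [mul_le_mul_of_nonneg_left hlog hb.le, hsq]

lemma aux_lb (a b : ℝ) (ha : 0 ≤ a) (hb : 0 < b) :
    - Real.log 2 ≤ Real.log ((a + b) / (2 * b)) := by
  have h : (2:ℝ)⁻¹ ≤ (a + b) / (2 * b) := by
    rw [le_div_iff₀ (by positivity)]
    nlinarith
  calc - Real.log 2 = Real.log 2⁻¹ := by rw [Real.log_inv]
    _ ≤ _ := Real.log_le_log (by norm_num) h

/-- **The deterministic core of the basic inequality (Lemma C.1) in the Group-Sort-Fuse
paper.**
Let `p, p₀` be probability densities with respect to a σ-finite measure `ν`, let `P₀` be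
the probability measure with density `p₀`, and let `Q` be any probability measure with
`Q({p₀ = 0}) = 0`.  Then
`(1/4) ∫_{p₀>0} log(p/p₀) dQ ≤ ∫_{p₀>0} (1/2) log((p+p₀)/(2p₀)) d(Q − P₀) − h²((p+p₀)/2, p₀)`,
where the left-hand integral is interpreted in `[−∞, ∞)` (formalized in `EReal` as the
difference of the lower integrals of the positive part and of the extended negative part,
the latter being `+∞` wherever `p = 0 < p₀`), `h` is the Hellinger distance, and the
integral against `d(Q − P₀)` is the difference of the corresponding (Bochner) integrals,
the `Q`-integrability of the integrand being assumed so that it is well defined. -/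
theorem basic_inequality_core
    {Y : Type*} [MeasurableSpace Y] (ν : Measure Y) [SigmaFinite ν]
    (p p0 : Y → ℝ)
    (hpmeas : Measurable p) (hp0meas : Measurable p0)
    (hpnn : ∀ y, 0 ≤ p y) (hp0nn : ∀ y, 0 ≤ p0 y)
    (hpdens : ∫⁻ y, ENNReal.ofReal (p y) ∂ν = 1)
    (hp0dens : ∫⁻ y, ENNReal.ofReal (p0 y) ∂ν = 1)
    (Q : Measure Y) [IsProbabilityMeasure Q]
    (hQnull : Q {y | p0 y = 0} = 0)
    (hQint : Integrable (fun y => Real.log ((p y + p0 y) / (2 * p0 y)))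
      (Q.restrict {y | 0 < p0 y})) :
    (((4⁻¹ : ℝ) : EReal) *
        ((((∫⁻ y in {y | 0 < p0 y}, ENNReal.ofReal (Real.log (p y / p0 y)) ∂Q) : ℝ≥0∞) :
            EReal)
          - (((∫⁻ y in {y | 0 < p0 y},
                (if p y = 0 then (⊤ : ℝ≥0∞)
                  else ENNReal.ofReal (- Real.log (p y / p0 y))) ∂Q) : ℝ≥0∞) : EReal)))
      ≤ (((∫ y in {y | 0 < p0 y}, 2⁻¹ * Real.log ((p y + p0 y) / (2 * p0 y)) ∂Q)
          - (∫ y in {y | 0 < p0 y}, 2⁻¹ * Real.log ((p y + p0 y) / (2 * p0 y))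
              ∂(ν.withDensity fun y => ENNReal.ofReal (p0 y)))
          - 2⁻¹ * ∫ y, (Real.sqrt ((p y + p0 y) / 2) - Real.sqrt (p0 y)) ^ 2 ∂ν : ℝ) :
        EReal) := by
  have hA : MeasurableSet {y | 0 < p0 y} := measurableSet_lt measurable_const hp0meas
  set A : Set Y := {y | 0 < p0 y} with hA_def
  set f : Y → ℝ := fun y => 2⁻¹ * Real.log ((p y + p0 y) / (2 * p0 y)) with hf_def
  have hfmeas : Measurable f :=
    (((hpmeas.add hp0meas).div (hp0meas.const_mul 2)).log).const_mul 2⁻¹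
  have hfint : Integrable f (Q.restrict A) := hQint.const_mul _
  -- integrability of the densities
  have hip : Integrable p ν := by
    refine ⟨hpmeas.aestronglyMeasurable, ?_⟩
    rw [hasFiniteIntegral_iff_ofReal (Filter.Eventually.of_forall hpnn), hpdens]
    exact ENNReal.one_lt_top
  have hip0 : Integrable p0 ν := by
    refine ⟨hp0meas.aestronglyMeasurable, ?_⟩
    rw [hasFiniteIntegral_iff_ofReal (Filter.Eventually.of_forall hp0nn), hp0dens]
    exact ENNReal.one_lt_top
  have hintp : ∫ y, p y ∂ν = 1 := by
    rw [integral_eq_lintegral_of_nonneg_ae (Filter.Eventually.of_forall hpnn)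
      hpmeas.aestronglyMeasurable, hpdens]
    simp
  have hintp0 : ∫ y, p0 y ∂ν = 1 := by
    rw [integral_eq_lintegral_of_nonneg_ae (Filter.Eventually.of_forall hp0nn)
      hp0meas.aestronglyMeasurable, hp0dens]
    simp
  set m : Y → ℝ := fun y => (p y + p0 y) / 2 with hm_def
  have hmmeas : Measurable m := (hpmeas.add hp0meas).div_const 2
  have hmnn : ∀ y, 0 ≤ m y := fun y => by
    have := hpnn y; have := hp0nn y; positivity
  have him : Integrable m ν := (hip.add hip0).div_const 2
  have hintm : ∫ y, m y ∂ν = 1 := by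
    rw [hm_def]
    rw [integral_div]
    rw [integral_add hip hip0, hintp, hintp0]
    norm_num
  set s : Y → ℝ := fun y => Real.sqrt (m y * p0 y) with hs_def
  have hsmeas : Measurable s := (hmmeas.mul hp0meas).sqrt
  have hsint : Integrable s ν := by
    refine Integrable.mono' ((him.add hip0).div_const 2) hsmeas.aestronglyMeasurable
      (Filter.Eventually.of_forall fun y => ?_)
    rw [Real.norm_eq_abs, abs_of_nonneg (Real.sqrt_nonneg _)]
    simp only [Pi.add_apply]
    have h1 : 0 ≤ m y * p0 y := mul_nonneg (hmnn y) (hp0nn y)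
    nlinarith [Real.sq_sqrt h1, Real.sqrt_nonneg (m y * p0 y), sq_nonneg (m y - p0 y),
      hmnn y, hp0nn y]
  -- Hellinger identity
  have hHell : ∫ y, (Real.sqrt (m y) - Real.sqrt (p0 y)) ^ 2 ∂ν
      = 2 - 2 * ∫ y, s y ∂ν := by
    have hexp : ∀ y, (Real.sqrt (m y) - Real.sqrt (p0 y)) ^ 2 = m y + p0 y - 2 * s y := by
      intro y
      show _ = m y + p0 y - 2 * Real.sqrt (m y * p0 y)
      rw [Real.sqrt_mul (hmnn y), sub_sq, Real.sq_sqrt (hmnn y), Real.sq_sqrt (hp0nn y)]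
      ring
    calc ∫ y, (Real.sqrt (m y) - Real.sqrt (p0 y)) ^ 2 ∂ν
        = ∫ y, (m y + p0 y - 2 * s y) ∂ν := by
          exact integral_congr_ae (Filter.Eventually.of_forall hexp)
      _ = (∫ y, (m y + p0 y) ∂ν) - ∫ y, 2 * s y ∂ν :=
          integral_sub (him.add hip0) (hsint.const_mul 2)
      _ = 2 - 2 * ∫ y, s y ∂ν := by
          rw [integral_add him hip0, hintm, hintp0, integral_const_mul]
          norm_num
  -- P0 integral rewritten as a ν-integral
  have hP0eq : (∫ y in A, f y ∂(ν.withDensity fun y => ENNReal.ofReal (p0 y)))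
      = ∫ y in A, p0 y * f y ∂ν := by
    have hrw : (fun y => ENNReal.ofReal (p0 y))
        = fun y => ((Real.toNNReal (p0 y) : ℝ≥0) : ℝ≥0∞) := rfl
    rw [hrw, setIntegral_withDensity_eq_setIntegral_smul
      (f := fun y => Real.toNNReal (p0 y)) hp0meas.real_toNNReal _ hA]
    refine setIntegral_congr_fun hA fun y _ => ?_
    simp [NNReal.smul_def, Real.coe_toNNReal _ (hp0nn y)]
  have hp0f_int : Integrable (fun y => p0 y * f y) (ν.restrict A) := by
    refine Integrable.mono'
      (g := fun y => s y + (2⁻¹ * Real.log 2) * p0 y)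
      (hsint.restrict.add ((hip0.restrict).const_mul (2⁻¹ * Real.log 2)))
      ((hp0meas.mul hfmeas).aestronglyMeasurable) ?_
    refine (ae_restrict_iff' hA).2 (Filter.Eventually.of_forall fun y hy => ?_)
    have hy0 : 0 < p0 y := hy
    have h1 := aux_kl (p y) (p0 y) (hpnn y) hy0
    have h2 := aux_lb (p y) (p0 y) (hpnn y) hy0
    have hl2 : 0 ≤ Real.log 2 := Real.log_nonneg one_le_two
    show |p0 y * (2⁻¹ * Real.log ((p y + p0 y) / (2 * p0 y)))|
      ≤ Real.sqrt ((p y + p0 y) / 2 * p0 y) + 2⁻¹ * Real.log 2 * p0 y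
    rw [abs_le]
    constructor
    · have h3 : p0 y * (2⁻¹ * (- Real.log 2))
          ≤ p0 y * (2⁻¹ * Real.log ((p y + p0 y) / (2 * p0 y))) :=
        mul_le_mul_of_nonneg_left (by linarith) hy0.le
      have hsnn : 0 ≤ Real.sqrt ((p y + p0 y) / 2 * p0 y) := Real.sqrt_nonneg _
      nlinarith
    · nlinarith [hy0.le]
  -- Step A : the P0 part plus the Hellinger part is nonpositive
  have hstep3 : ∫ y in A, p0 y * f y ∂ν ≤ (∫ y, s y ∂ν) - 1 := by
    have hle : ∫ y in A, p0 y * f y ∂ν ≤ ∫ y in A, (s y - p0 y) ∂ν := by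
      refine integral_mono_ae hp0f_int ((hsint.sub hip0).restrict)
        ((ae_restrict_iff' hA).2 (Filter.Eventually.of_forall fun y hy => ?_))
      exact aux_kl (p y) (p0 y) (hpnn y) hy
    have heq : ∫ y in A, (s y - p0 y) ∂ν = ∫ y, (s y - p0 y) ∂ν := by
      refine setIntegral_eq_integral_of_forall_compl_eq_zero fun y hy => ?_
      have h0 : p0 y = 0 := by
        by_contra h
        exact hy (lt_of_le_of_ne (hp0nn y) (Ne.symm h))
      simp [hs_def, h0]
    rw [heq, integral_sub hsint hip0, hintp0] at hle
    exact hle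
  have hstepA : (∫ y in A, f y ∂(ν.withDensity fun y => ENNReal.ofReal (p0 y)))
      + 2⁻¹ * ∫ y, (Real.sqrt (m y) - Real.sqrt (p0 y)) ^ 2 ∂ν ≤ 0 := by
    rw [hP0eq, hHell]
    linarith
  -- Step B : the lower-integral part
  set Pp : ℝ≥0∞ := ∫⁻ y in A, ENNReal.ofReal (Real.log (p y / p0 y)) ∂Q with hPp
  set Np : ℝ≥0∞ := ∫⁻ y in A,
      (if p y = 0 then (⊤ : ℝ≥0∞) else ENNReal.ofReal (- Real.log (p y / p0 y))) ∂Q with hNp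
  rcases eq_or_ne Np ⊤ with hN | hN
  · rw [hN, EReal.coe_ennreal_top, EReal.sub_top, EReal.coe_mul_bot_of_pos (by norm_num)]
    exact bot_le
  · -- `p ≠ 0` a.e. on `A`
    have hpne : ∀ᵐ y ∂Q.restrict A, p y ≠ 0 := by
      have hmeas0 : MeasurableSet {y | p y = 0} := hpmeas (measurableSet_singleton 0)
      rw [ae_iff]
      have hset : {y | ¬ p y ≠ 0} = {y | p y = 0} := by ext y; simp
      rw [hset]
      by_contra h
      apply hN
      refine top_le_iff.1 ?_
      calc (⊤ : ℝ≥0∞) = ⊤ * (Q.restrict A) {y | p y = 0} := by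
            rw [ENNReal.top_mul h]
        _ = ∫⁻ y in A, Set.indicator {y | p y = 0} (fun _ => ⊤) y ∂Q := by
            rw [lintegral_indicator hmeas0]
            simp
        _ ≤ Np := by
            rw [hNp]
            refine lintegral_mono fun y => ?_
            by_cases hy : p y = 0 <;> simp [Set.indicator, hy]
    have hptw : ∀ᵐ y ∂Q.restrict A, Real.log (p y / p0 y) ≤ 4 * f y := by
      have h1 : ∀ᵐ y ∂Q.restrict A, 0 < p0 y :=
        (ae_restrict_iff' hA).2 (Filter.Eventually.of_forall fun y hy => hy)
      filter_upwards [hpne, h1] with y hy hy0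
      have := aux_amgm_log (p y) (p0 y) (lt_of_le_of_ne (hpnn y) (Ne.symm hy)) hy0
      rw [hf_def]
      linarith
    set g : Y → ℝ := fun y => Real.log (p y / p0 y) with hg_def
    have hgmeas : Measurable g := (hpmeas.div hp0meas).log
    have hNeq : Np = ∫⁻ y in A, ENNReal.ofReal (- g y) ∂Q := by
      rw [hNp]
      refine lintegral_congr_ae ?_
      filter_upwards [hpne] with y hy
      simp [hy, hg_def]
    have h4f_int : Integrable (fun y => 4 * f y) (Q.restrict A) := hfint.const_mul 4
    have hPlt : Pp < ⊤ := by
      rw [hPp]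
      calc ∫⁻ y in A, ENNReal.ofReal (g y) ∂Q
          ≤ ∫⁻ y in A, ENNReal.ofReal (4 * f y) ∂Q :=
            lintegral_mono_ae (hptw.mono fun y hy => ENNReal.ofReal_le_ofReal hy)
        _ ≤ ∫⁻ y in A, (‖4 * f y‖₊ : ℝ≥0∞) ∂Q :=
            lintegral_mono fun y => Real.ofReal_le_enorm _
        _ < ⊤ := h4f_int.2
    have hgint : Integrable g (Q.restrict A) := by
      refine ⟨hgmeas.aestronglyMeasurable, ?_⟩
      have hb : ∀ y, (‖g y‖₊ : ℝ≥0∞) ≤ ENNReal.ofReal (g y) + ENNReal.ofReal (- g y) := by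
        intro y
        rw [← enorm_eq_nnnorm, ← ofReal_norm, Real.norm_eq_abs]
        rcases abs_cases (g y) with ⟨h, _⟩ | ⟨h, _⟩
        · rw [h]; exact le_add_of_le_of_nonneg le_rfl zero_le
        · rw [h]; exact le_add_of_nonneg_of_le zero_le le_rfl
      have : ∫⁻ y in A, (‖g y‖₊ : ℝ≥0∞) ∂Q ≤ Pp + Np := by
        rw [hPp, hNeq, ← lintegral_add_left hgmeas.ennreal_ofReal]
        exact lintegral_mono hb
      exact lt_of_le_of_lt this (ENNReal.add_lt_top.2 ⟨hPlt, hN.lt_top⟩)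
    have hint_eq : ∫ y in A, g y ∂Q = Pp.toReal - Np.toReal := by
      rw [integral_eq_lintegral_pos_part_sub_lintegral_neg_part hgint, hNeq]
    have hfQ : 4⁻¹ * ∫ y in A, g y ∂Q ≤ ∫ y in A, f y ∂Q := by
      rw [← integral_const_mul]
      refine integral_mono_ae (hgint.const_mul _) hfint ?_
      filter_upwards [hptw] with y hy
      linarith
    -- put everything together in `EReal`
    have hPt : (Pp : EReal) = ((Pp.toReal : ℝ) : EReal) := by
      rw [← ENNReal.ofReal_toReal hPlt.ne]
      rw [EReal.coe_ennreal_ofReal, max_eq_left ENNReal.toReal_nonneg]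
      rw [ENNReal.toReal_ofReal ENNReal.toReal_nonneg]
    have hNt : (Np : EReal) = ((Np.toReal : ℝ) : EReal) := by
      rw [← ENNReal.ofReal_toReal hN]
      rw [EReal.coe_ennreal_ofReal, max_eq_left ENNReal.toReal_nonneg]
      rw [ENNReal.toReal_ofReal ENNReal.toReal_nonneg]
    rw [hPt, hNt, ← EReal.coe_sub, ← EReal.coe_mul, EReal.coe_le_coe_iff]
    have := hstepA
    rw [← hint_eq]
    linarith
end
end
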